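/- Let u: Ω_h → ℝ³ satisfy u = 0 on ∂Ω_h, and let v: ℝ³ → ℝ³ be the piecewise-constant step function v(x) = u(y) for x in the half-open cube C_h⁺(y) = [y₁,y₁+h)×[y₂,y₂+h)×[y₃,y₃+h), y ∈ Ω_h, and v = 0 elsewhere. Then there exists a Lipschitz continuous function w: Ω → ℝ³ with compact support such that ‖w - v‖_{L²(Ω)} ≤ K h ∑_{j=1}³ ‖D_j⁺u‖_{Ω_h} and ‖∂_{x_i}w‖_{L²(Ω)} ≤ K ∑_{j=1}³ ‖D_j⁺u‖_{Ω_h} for i = 1,2,3, where K is independent of u and h. -/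

import Mathlib

open Finset MeasureTheory
open scoped NNReal

abbrev Pt := Fin 3 → ℤ

def ee (i : Fin 3) : Pt := fun j => if j = i then 1 else 0

open scoped Classical in
noncomputable def bdry (Ωh : Finset Pt) : Finset Pt :=
  Ωh.filter (fun x => ∃ i : Fin 3, x + ee i ∉ Ωh ∨ x - ee i ∉ Ωh)

/-- Discrete L² norm of the forward difference `‖D_j⁺u‖_{Ω_h}` (with `0`-extension). -/
noncomputable def DpNorm (h : ℝ) (Ωh : Finset Pt) (u : Pt → Fin 3 → ℝ) (j : Fin 3) : ℝ :=
  Real.sqrt (∑ z ∈ Ωh, (∑ i, ((u (z + ee j) i - u z i) / h) ^ 2) * h ^ 3)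

open scoped ENNReal

namespace LipInterp

noncomputable def g : ℝ → ℝ := Real.smoothTransition

lemma g_contDiff : ContDiff ℝ 1 g := Real.smoothTransition.contDiff

lemma g_diff : Differentiable ℝ g := g_contDiff.differentiable one_ne_zero

lemma g_zero {t : ℝ} (ht : t ≤ 0) : g t = 0 := Real.smoothTransition.zero_of_nonpos ht
lemma g_one {t : ℝ} (ht : 1 ≤ t) : g t = 1 := Real.smoothTransition.one_of_one_le ht
lemma g_mem {t : ℝ} : g t ∈ Set.Icc (0:ℝ) 1 :=
  ⟨Real.smoothTransition.nonneg t, Real.smoothTransition.le_one t⟩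

lemma derivg_zero_of_neg {t : ℝ} (ht : t < 0) : deriv g t = 0 := by
  have h1 : g =ᶠ[nhds t] (fun _ => (0:ℝ)) := by
    filter_upwards [Iio_mem_nhds ht] with s hs
    exact g_zero (le_of_lt hs)
  rw [h1.deriv_eq, deriv_const]

lemma derivg_zero_of_gt {t : ℝ} (ht : 1 < t) : deriv g t = 0 := by
  have h1 : g =ᶠ[nhds t] (fun _ => (1:ℝ)) := by
    filter_upwards [Ioi_mem_nhds ht] with s hs
    exact g_one (le_of_lt hs)
  rw [h1.deriv_eq, deriv_const]

lemma derivg_cont : Continuous (deriv g) := g_contDiff.continuous_deriv le_rfl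

noncomputable def ψ (t : ℝ) : ℝ := g (t + 1) - g t
noncomputable def ψ' (t : ℝ) : ℝ := deriv g (t + 1) - deriv g t

lemma hasDerivAt_ψ (t : ℝ) : HasDerivAt ψ (ψ' t) t := by
  have h1 : HasDerivAt (fun s : ℝ => g (s + 1)) (deriv g (t + 1)) t := by
    have := ((g_diff (t + 1)).hasDerivAt).comp t ((hasDerivAt_id t).add_const 1)
    simpa [Function.comp_def] using this
  exact h1.sub (g_diff t).hasDerivAt

lemma ψ'_cont : Continuous ψ' :=
  (derivg_cont.comp (continuous_id.add continuous_const)).sub derivg_cont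

lemma abs_ψ_le (t : ℝ) : |ψ t| ≤ 1 := by
  have h1 := @g_mem (t + 1); have h2 := @g_mem t
  rw [ψ, abs_le]; constructor <;> simp [Set.mem_Icc] at h1 h2 <;> linarith

lemma ψ_zero_left {t : ℝ} (ht : t ≤ -1) : ψ t = 0 := by
  rw [ψ, g_zero (by linarith), g_zero (by linarith)]; ring

lemma ψ_zero_right {t : ℝ} (ht : 1 ≤ t) : ψ t = 0 := by
  rw [ψ, g_one (by linarith), g_one ht]; ring

lemma ψ_partition {a : ℝ} (h0 : 0 ≤ a) (h1 : a ≤ 1) : ψ a + ψ (a - 1) = 1 := by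
  have e : a - 1 + 1 = a := by ring
  rw [ψ, ψ, e, g_one (by linarith : (1:ℝ) ≤ a + 1), g_zero (by linarith : a - 1 ≤ 0)]; ring

lemma ψ'_zero_left {t : ℝ} (ht : t < -1) : ψ' t = 0 := by
  rw [ψ', derivg_zero_of_neg (by linarith), derivg_zero_of_neg (by linarith)]; ring

lemma ψ'_zero_right {t : ℝ} (ht : 1 < t) : ψ' t = 0 := by
  rw [ψ', derivg_zero_of_gt (by linarith), derivg_zero_of_gt ht]; ring

lemma ψ'_partition {a : ℝ} (h0 : 0 < a) (h1 : a < 1) : ψ' a + ψ' (a - 1) = 0 := by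
  have e : a - 1 + 1 = a := by ring
  rw [ψ', ψ', e, derivg_zero_of_gt (by linarith : (1:ℝ) < a + 1),
    derivg_zero_of_neg (by linarith : a - 1 < 0)]; ring

lemma exists_ψ'_bound : ∃ M : ℝ, 0 < M ∧ ∀ t, |ψ' t| ≤ M := by
  have hsupp : Function.support (deriv g) ⊆ Set.Icc 0 1 := by
    intro t ht
    by_contra hmem
    simp only [Set.mem_Icc, not_and_or, not_le] at hmem
    rcases hmem with h | h
    · exact ht (derivg_zero_of_neg h)
    · exact ht (derivg_zero_of_gt h)
  have hcs : HasCompactSupport (deriv g) :=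
    HasCompactSupport.intro isCompact_Icc (fun t ht => by
      by_contra h0; exact ht (hsupp h0))
  obtain ⟨C, hC⟩ := hcs.exists_bound_of_continuous derivg_cont
  refine ⟨2 * C + 1, ?_, fun t => ?_⟩
  · have := (norm_nonneg (deriv g 0)).trans (hC 0); linarith
  · have h1 := hC (t + 1); have h2 := hC t
    rw [Real.norm_eq_abs] at h1 h2
    rw [ψ']
    calc |deriv g (t+1) - deriv g t| ≤ |deriv g (t+1)| + |deriv g t| := abs_sub _ _
    _ ≤ 2 * C + 1 := by linarith

noncomputable def Φ (h : ℝ) (z : Pt) (x : Fin 3 → ℝ) : ℝ := ∏ k, ψ (x k / h - z k)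

noncomputable def W (h : ℝ) (G : Finset Pt) (u : Pt → Fin 3 → ℝ) (x : Fin 3 → ℝ) :
    Fin 3 → ℝ := ∑ z ∈ G, Φ h z x • u z

def corners : Finset Pt := Fintype.piFinset fun _ => ({0,1} : Finset ℤ)

lemma mem_corners {ε : Pt} : ε ∈ corners ↔ ∀ k, ε k = 0 ∨ ε k = 1 := by
  simp [corners, Fintype.mem_piFinset]

lemma zero_mem_corners : (0 : Pt) ∈ corners := mem_corners.2 fun k => Or.inl rfl

lemma card_corners : corners.card = 8 := by
  rw [corners, Fintype.card_piFinset]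
  norm_num

lemma abs_Φ_le_one (h : ℝ) (z : Pt) (x : Fin 3 → ℝ) : |Φ h z x| ≤ 1 := by
  rw [Φ, Finset.abs_prod]
  calc ∏ k, |ψ (x k / h - z k)| ≤ ∏ k : Fin 3, 1 :=
        Finset.prod_le_prod (fun k _ => abs_nonneg _) (fun k _ => abs_ψ_le _)
  _ = 1 := by simp

section Cell

variable {h : ℝ} {z : Pt} {x : Fin 3 → ℝ}

/-- `x` lies in the (half-open) cell of `z`, in normalized coordinates. -/
def InCell (h : ℝ) (z : Pt) (x : Fin 3 → ℝ) : Prop :=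
  ∀ i, 0 ≤ x i / h - z i ∧ x i / h - z i < 1

lemma Φ_vanish (ha : InCell h z x) {y : Pt} (hy : ¬ ∀ k, y k = z k ∨ y k = z k + 1) :
    Φ h y x = 0 := by
  push_neg at hy
  obtain ⟨k, hk1, hk2⟩ := hy
  apply Finset.prod_eq_zero (Finset.mem_univ k)
  rcases lt_or_gt_of_ne hk1 with hlt | hgt
  · -- y k ≤ z k - 1
    have : (y k : ℝ) ≤ (z k : ℝ) - 1 := by exact_mod_cast Int.le_sub_one_of_lt hlt
    have h2 := (ha k).1
    exact ψ_zero_right (by linarith)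
  · -- y k ≥ z k + 2
    have : (z k : ℝ) + 2 ≤ (y k : ℝ) := by
      have : z k + 2 ≤ y k := by omega
      exact_mod_cast this
    have h2 := (ha k).2
    exact ψ_zero_left (by linarith)

lemma Φ_corner_eq (ε : Pt) :
    Φ h (z + ε) x = ∏ k, ψ (x k / h - z k - ε k) := by
  apply Finset.prod_congr rfl
  intro k _
  congr 1
  push_cast [Pi.add_apply]
  ring

lemma sum_Φ_corners (ha : InCell h z x) :
    ∑ ε ∈ corners, Φ h (z + ε) x = 1 := by
  have e1 : ∑ ε ∈ corners, Φ h (z + ε) x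
      = ∑ ε ∈ corners, ∏ k, ψ (x k / h - z k - ε k) :=
    Finset.sum_congr rfl fun ε _ => Φ_corner_eq ε
  rw [e1, corners,
    ← Finset.prod_univ_sum (fun _ : Fin 3 => ({0,1} : Finset ℤ))
      (fun k e => ψ (x k / h - z k - (e : ℝ)))]
  have : ∀ k : Fin 3, ∑ e ∈ ({0,1} : Finset ℤ), ψ (x k / h - z k - e) = 1 := by
    intro k
    rw [Finset.sum_pair (by decide : (0:ℤ) ≠ 1)]
    push_cast
    have := ψ_partition (ha k).1 (le_of_lt (ha k).2)
    simpa using this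
  rw [Finset.prod_congr rfl fun k _ => this k]
  simp

variable {G : Finset Pt} {u : Pt → Fin 3 → ℝ}

lemma W_eq_corners (hu0 : ∀ y ∉ G, u y = 0) (ha : InCell h z x) :
    W h G u x = ∑ ε ∈ corners, Φ h (z + ε) x • u (z + ε) := by
  classical
  set T := corners.image (fun ε => z + ε) with hT
  have hWT : W h G u x = ∑ y ∈ G ∪ T, Φ h y x • u y := by
    apply Finset.sum_subset Finset.subset_union_left
    intro y _ hyG
    rw [hu0 y hyG, smul_zero]
  have hTT : ∑ y ∈ G ∪ T, Φ h y x • u y = ∑ y ∈ T, Φ h y x • u y := by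
    symm
    apply Finset.sum_subset Finset.subset_union_right
    intro y _ hyT
    have : ¬ ∀ k, y k = z k ∨ y k = z k + 1 := by
      intro hk
      apply hyT
      rw [hT, Finset.mem_image]
      refine ⟨y - z, ?_, by abel⟩
      rw [mem_corners]
      intro k
      rcases hk k with h1 | h1 <;> simp [Pi.sub_apply, h1]
    rw [Φ_vanish ha this, zero_smul]
  rw [hWT, hTT, hT, Finset.sum_image]
  intro ε _ ε' _ hεε'
  exact add_left_cancel hεε'

lemma W_sub_corners (hu0 : ∀ y ∉ G, u y = 0) (ha : InCell h z x) :
    W h G u x - u z = ∑ ε ∈ corners, Φ h (z + ε) x • (u (z + ε) - u z) := by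
  have e : ∑ ε ∈ corners, Φ h (z + ε) x • (u (z + ε) - u z)
      = (∑ ε ∈ corners, Φ h (z + ε) x • u (z + ε))
        - (∑ ε ∈ corners, Φ h (z + ε) x) • u z := by
    rw [Finset.sum_smul, ← Finset.sum_sub_distrib]
    apply Finset.sum_congr rfl
    intro ε _
    rw [smul_sub]
  rw [e, sum_Φ_corners ha, one_smul, ← W_eq_corners hu0 ha]

end Cell

section Bsum

variable {u : Pt → Fin 3 → ℝ} {z : Pt}

/-- Sum of absolute forward differences over corners of the cube at `z`. -/
noncomputable def B (u : Pt → Fin 3 → ℝ) (z : Pt) : ℝ :=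
  ∑ η ∈ corners, ∑ j, ∑ i, |u (z + η + ee j) i - u (z + η) i|

lemma B_nonneg (u : Pt → Fin 3 → ℝ) (z : Pt) : 0 ≤ B u z := by
  apply Finset.sum_nonneg; intro η _
  apply Finset.sum_nonneg; intro j _
  apply Finset.sum_nonneg; intro i _
  exact abs_nonneg _

lemma term_le_B {η : Pt} (hη : η ∈ corners) (j i : Fin 3) :
    |u (z + η + ee j) i - u (z + η) i| ≤ B u z := by
  have h1 : |u (z + η + ee j) i - u (z + η) i|
      ≤ ∑ i', |u (z + η + ee j) i' - u (z + η) i'| :=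
    Finset.single_le_sum (f := fun i' => |u (z + η + ee j) i' - u (z + η) i'|)
      (fun i' _ => abs_nonneg _) (Finset.mem_univ i)
  have h2 : ∑ i', |u (z + η + ee j) i' - u (z + η) i'|
      ≤ ∑ j', ∑ i', |u (z + η + ee j') i' - u (z + η) i'| :=
    Finset.single_le_sum
      (f := fun j' => ∑ i', |u (z + η + ee j') i' - u (z + η) i'|)
      (fun j' _ => Finset.sum_nonneg fun i' _ => abs_nonneg _) (Finset.mem_univ j)
  have h3 : ∑ j', ∑ i', |u (z + η + ee j') i' - u (z + η) i'| ≤ B u z :=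
    Finset.single_le_sum
      (f := fun η' => ∑ j', ∑ i', |u (z + η' + ee j') i' - u (z + η') i'|)
      (fun η' _ => Finset.sum_nonneg fun j' _ => Finset.sum_nonneg fun i' _ => abs_nonneg _)
      hη
  linarith

lemma step_le_B {η η' : Pt} (hη : η ∈ corners) (j : Fin 3)
    (hst : η' = η + ee j ∨ η' = η) (i : Fin 3) :
    |u (z + η') i - u (z + η) i| ≤ B u z := by
  rcases hst with rfl | rfl
  · rw [← add_assoc]
    exact term_le_B hη j i
  · simpa using B_nonneg u z

lemma diff_le_B {ε : Pt} (hε : ε ∈ corners) (i : Fin 3) :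
    |u (z + ε) i - u z i| ≤ 3 * B u z := by
  classical
  set ε1 : Pt := fun k => if k = 0 then ε 0 else 0 with hε1
  set ε2 : Pt := fun k => if k = 2 then 0 else ε k with hε2
  have hε1c : ε1 ∈ corners := by
    rw [mem_corners]; intro k
    by_cases hk : k = 0
    · subst hk; simpa [hε1] using mem_corners.1 hε 0
    · simp [hε1, hk]
  have hε2c : ε2 ∈ corners := by
    rw [mem_corners]; intro k
    by_cases hk : k = 2
    · simp [hε2, hk]
    · simpa [hε2, hk] using mem_corners.1 hε k
  have s1 : |u (z + ε1) i - u z i| ≤ B u z := by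
    have h0 : (z : Pt) = z + 0 := by simp
    rcases mem_corners.1 hε 0 with h | h
    · have : ε1 = 0 := by
        funext k; by_cases hk : k = 0 <;> simp [hε1, hk, h]
      rw [this]; simpa using B_nonneg u z
    · have : ε1 = 0 + ee 0 := by
        funext k; by_cases hk : k = 0 <;> simp [hε1, ee, hk, h]
      rw [h0, this, ← add_assoc]
      have := step_le_B (u := u) (z := z) zero_mem_corners 0
        (Or.inl rfl : (0 : Pt) + ee 0 = 0 + ee 0 ∨ (0:Pt) + ee 0 = 0) i
      simpa [add_assoc] using this
  have s2 : |u (z + ε2) i - u (z + ε1) i| ≤ B u z := by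
    apply step_le_B hε1c 1 _ i
    rcases mem_corners.1 hε 1 with h | h
    · right
      funext k
      fin_cases k <;> simp [hε1, hε2, h]
    · left
      funext k
      fin_cases k <;> simp [hε1, hε2, ee, h]
  have s3 : |u (z + ε) i - u (z + ε2) i| ≤ B u z := by
    apply step_le_B hε2c 2 _ i
    rcases mem_corners.1 hε 2 with h | h
    · right
      funext k
      fin_cases k <;> simp [hε2, h]
    · left
      funext k
      fin_cases k <;> simp [hε2, ee, h]
  calc |u (z + ε) i - u z i|
      ≤ |u (z + ε) i - u (z + ε2) i| + |u (z + ε2) i - u (z + ε1) i|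
        + |u (z + ε1) i - u z i| := by
        have := abs_sub_le (u (z + ε) i) (u (z + ε2) i) (u z i)
        have := abs_sub_le (u (z + ε2) i) (u (z + ε1) i) (u z i)
        linarith [abs_sub_le (u (z + ε) i) (u (z + ε2) i) (u z i),
          abs_sub_le (u (z + ε2) i) (u (z + ε1) i) (u z i)]
  _ ≤ 3 * B u z := by linarith

end Bsum

section Deriv

variable {h : ℝ} {z y : Pt} {x : Fin 3 → ℝ} {G : Finset Pt} {u : Pt → Fin 3 → ℝ}

noncomputable def Φf (h : ℝ) (z : Pt) (x : Fin 3 → ℝ) : (Fin 3 → ℝ) →L[ℝ] ℝ :=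
  ∑ k, (∏ j ∈ Finset.univ.erase k, ψ (x j / h - z j)) •
    (ψ' (x k / h - z k) • (h⁻¹ • ContinuousLinearMap.proj (R := ℝ) (φ := fun _ : Fin 3 => ℝ) k))

noncomputable def Φd (h : ℝ) (i : Fin 3) (z : Pt) (x : Fin 3 → ℝ) : ℝ :=
  (ψ' (x i / h - z i) * h⁻¹) * ∏ k ∈ Finset.univ.erase i, ψ (x k / h - z k)

lemma hasFDerivAt_Φ (z : Pt) (x : Fin 3 → ℝ) : HasFDerivAt (Φ h z) (Φf h z x) x := by
  have hg : ∀ k ∈ (Finset.univ : Finset (Fin 3)),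
      HasFDerivAt (fun y : Fin 3 → ℝ => ψ (y k / h - z k))
        (ψ' (x k / h - z k) •
          ((h⁻¹ : ℝ) • ContinuousLinearMap.proj (R := ℝ) (φ := fun _ : Fin 3 => ℝ) k)) x := by
    intro k _
    have hf : HasFDerivAt (fun y : Fin 3 → ℝ => y k / h - z k)
        ((h⁻¹ : ℝ) • ContinuousLinearMap.proj (R := ℝ) (φ := fun _ : Fin 3 => ℝ) k) x := by
      have h1 : HasFDerivAt (fun y : Fin 3 → ℝ => y k)
          (ContinuousLinearMap.proj (R := ℝ) (φ := fun _ : Fin 3 => ℝ) k) x :=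
        hasFDerivAt_apply k x
      have h2 := (h1.const_mul (h⁻¹ : ℝ)).sub_const (z k : ℝ)
      simpa [div_eq_inv_mul] using h2
    exact (hasDerivAt_ψ (x k / h - z k)).comp_hasFDerivAt x hf
  exact HasFDerivAt.finset_prod hg

lemma Φf_apply (i : Fin 3) : Φf h z x (Pi.single i 1) = Φd h i z x := by
  rw [Φf, Φd, ContinuousLinearMap.sum_apply]
  rw [Finset.sum_eq_single i]
  · simp [ContinuousLinearMap.proj_apply]
    ring
  · intro k _ hk
    simp [ContinuousLinearMap.proj_apply, Pi.single_apply, hk.symm,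
      (Ne.symm hk : i ≠ k)]
  · simp

noncomputable def Wd (h : ℝ) (G : Finset Pt) (u : Pt → Fin 3 → ℝ) (i : Fin 3)
    (x : Fin 3 → ℝ) : Fin 3 → ℝ := ∑ z ∈ G, Φd h i z x • u z

lemma hasFDerivAt_W :
    HasFDerivAt (W h G u) (∑ z ∈ G, (Φf h z x).smulRight (u z)) x := by
  apply HasFDerivAt.fun_sum
  intro z _
  exact (hasFDerivAt_Φ z x).smul_const (u z)

lemma fderiv_W_apply (i : Fin 3) :
    fderiv ℝ (W h G u) x (Pi.single i 1) = Wd h G u i x := by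
  rw [(hasFDerivAt_W (G := G) (u := u) (x := x)).fderiv]
  rw [Wd, ContinuousLinearMap.sum_apply]
  apply Finset.sum_congr rfl
  intro z _
  rw [ContinuousLinearMap.smulRight_apply, Φf_apply]

/-- `x` lies in the open cell of `z`. -/
def InCello (h : ℝ) (z : Pt) (x : Fin 3 → ℝ) : Prop :=
  ∀ i, 0 < x i / h - z i ∧ x i / h - z i < 1

lemma InCello.inCell (ha : InCello h z x) : InCell h z x :=
  fun i => ⟨le_of_lt (ha i).1, (ha i).2⟩

lemma Φd_vanish (ha : InCello h z x) (i : Fin 3)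
    (hy : ¬ ∀ k, y k = z k ∨ y k = z k + 1) : Φd h i y x = 0 := by
  push_neg at hy
  obtain ⟨k, hk1, hk2⟩ := hy
  rcases eq_or_ne k i with rfl | hki
  · apply mul_eq_zero_of_left
    apply mul_eq_zero_of_left
    rcases lt_or_gt_of_ne hk1 with hlt | hgt
    · have : (y k : ℝ) ≤ (z k : ℝ) - 1 := by exact_mod_cast Int.le_sub_one_of_lt hlt
      exact ψ'_zero_right (by linarith [(ha k).1])
    · have : (z k : ℝ) + 2 ≤ (y k : ℝ) := by
        have : z k + 2 ≤ y k := by omega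
        exact_mod_cast this
      exact ψ'_zero_left (by linarith [(ha k).2])
  · apply mul_eq_zero_of_right
    apply Finset.prod_eq_zero (Finset.mem_erase.2 ⟨hki, Finset.mem_univ k⟩)
    rcases lt_or_gt_of_ne hk1 with hlt | hgt
    · have : (y k : ℝ) ≤ (z k : ℝ) - 1 := by exact_mod_cast Int.le_sub_one_of_lt hlt
      exact ψ_zero_right (by linarith [(ha k).1])
    · have : (z k : ℝ) + 2 ≤ (y k : ℝ) := by
        have : z k + 2 ≤ y k := by omega
        exact_mod_cast this
      exact ψ_zero_left (by linarith [(ha k).2])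

lemma Φd_corner_eq (i : Fin 3) (ε : Pt) :
    Φd h i (z + ε) x
      = h⁻¹ * ∏ k, (if k = i then ψ' (x k / h - z k - ε k) else ψ (x k / h - z k - ε k)) := by
  have e2 : ∀ k, x k / h - ((z + ε) k : ℝ) = x k / h - z k - ε k := by
    intro k; push_cast [Pi.add_apply]; ring
  have hsplit : (∏ k, (if k = i then ψ' (x k / h - z k - ε k) else ψ (x k / h - z k - ε k)))
      = ψ' (x i / h - z i - ε i) * ∏ k ∈ Finset.univ.erase i, ψ (x k / h - z k - ε k) := by
    rw [← Finset.mul_prod_erase Finset.univ _ (Finset.mem_univ i)]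
    congr 1
    · exact if_pos rfl
    · exact Finset.prod_congr rfl fun k hk => if_neg (Finset.mem_erase.1 hk).1
  have hprod : (∏ k ∈ Finset.univ.erase i, ψ (x k / h - ((z + ε) k : ℝ)))
      = ∏ k ∈ Finset.univ.erase i, ψ (x k / h - z k - ε k) :=
    Finset.prod_congr rfl fun k _ => by rw [e2 k]
  rw [hsplit, Φd, e2 i, hprod]
  ring

lemma Φd_sum_corners (ha : InCello h z x) (i : Fin 3) :
    ∑ ε ∈ corners, Φd h i (z + ε) x = 0 := by
  rw [Finset.sum_congr rfl (fun ε _ => Φd_corner_eq i ε), ← Finset.mul_sum]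
  rw [corners, ← Finset.prod_univ_sum (fun _ : Fin 3 => ({0,1} : Finset ℤ))
    (fun k e => if k = i then ψ' (x k / h - z k - (e:ℝ)) else ψ (x k / h - z k - (e:ℝ)))]
  apply mul_eq_zero_of_right
  apply Finset.prod_eq_zero (Finset.mem_univ i)
  simp only [if_pos rfl]
  rw [Finset.sum_pair (by decide : (0:ℤ) ≠ 1)]
  push_cast
  have := ψ'_partition (ha i).1 (ha i).2
  simpa using this

end Deriv

section Bounds

variable {h : ℝ} {z y : Pt} {x : Fin 3 → ℝ} {G : Finset Pt} {u : Pt → Fin 3 → ℝ} {M : ℝ}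

lemma abs_Φd_le (hM : ∀ t, |ψ' t| ≤ M) (hh : 0 < h) (i : Fin 3) :
    |Φd h i y x| ≤ M * h⁻¹ := by
  rw [Φd, abs_mul, abs_mul]
  have h1 : |ψ' (x i / h - y i)| ≤ M := hM _
  have h2 : |(h⁻¹ : ℝ)| = h⁻¹ := abs_of_pos (inv_pos.2 hh)
  have h3 : |∏ k ∈ Finset.univ.erase i, ψ (x k / h - y k)| ≤ 1 := by
    rw [Finset.abs_prod]
    calc ∏ k ∈ Finset.univ.erase i, |ψ (x k / h - y k)|
        ≤ ∏ k ∈ Finset.univ.erase i, 1 :=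
          Finset.prod_le_prod (fun k _ => abs_nonneg _) (fun k _ => abs_ψ_le _)
    _ = 1 := Finset.prod_const_one
  have hM0 : 0 ≤ M := le_trans (abs_nonneg _) (hM 0)
  have hinv : (0:ℝ) ≤ h⁻¹ := le_of_lt (inv_pos.2 hh)
  rw [h2]
  calc |ψ' (x i / h - y i)| * h⁻¹ * |∏ k ∈ Finset.univ.erase i, ψ (x k / h - y k)|
      ≤ M * h⁻¹ * 1 := by
        apply mul_le_mul _ h3 (abs_nonneg _) (by positivity)
        exact mul_le_mul_of_nonneg_right h1 hinv
  _ = M * h⁻¹ := mul_one _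

lemma Wd_eq_corners (hu0 : ∀ y ∉ G, u y = 0) (ha : InCello h z x) (i : Fin 3) :
    Wd h G u i x = ∑ ε ∈ corners, Φd h i (z + ε) x • (u (z + ε) - u z) := by
  classical
  set T := corners.image (fun ε => z + ε) with hT
  have hWT : Wd h G u i x = ∑ y ∈ G ∪ T, Φd h i y x • u y := by
    apply Finset.sum_subset Finset.subset_union_left
    intro y _ hyG
    rw [hu0 y hyG, smul_zero]
  have hTT : ∑ y ∈ G ∪ T, Φd h i y x • u y = ∑ y ∈ T, Φd h i y x • u y := by
    symm
    apply Finset.sum_subset Finset.subset_union_right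
    intro y _ hyT
    have hnk : ¬ ∀ k, y k = z k ∨ y k = z k + 1 := by
      intro hk
      apply hyT
      rw [hT, Finset.mem_image]
      refine ⟨y - z, ?_, by abel⟩
      rw [mem_corners]
      intro k
      rcases hk k with h1 | h1 <;> simp [Pi.sub_apply, h1]
    rw [Φd_vanish ha i hnk, zero_smul]
  have himg : ∑ y ∈ T, Φd h i y x • u y = ∑ ε ∈ corners, Φd h i (z + ε) x • u (z + ε) := by
    rw [hT, Finset.sum_image]
    intro ε _ ε' _ hεε'
    exact add_left_cancel hεε'
  have e : ∑ ε ∈ corners, Φd h i (z + ε) x • (u (z + ε) - u z)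
      = (∑ ε ∈ corners, Φd h i (z + ε) x • u (z + ε))
        - (∑ ε ∈ corners, Φd h i (z + ε) x) • u z := by
    rw [Finset.sum_smul, ← Finset.sum_sub_distrib]
    exact Finset.sum_congr rfl fun ε _ => smul_sub _ _ _
  rw [e, Φd_sum_corners ha i, zero_smul, sub_zero, hWT, hTT, himg]

lemma W_sub_apply_le (hu0 : ∀ y ∉ G, u y = 0) (ha : InCell h z x) (i : Fin 3) :
    |W h G u x i - u z i| ≤ 24 * B u z := by
  have E := congrFun (W_sub_corners hu0 ha) i
  rw [Pi.sub_apply] at E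
  rw [E, Finset.sum_apply]
  calc |∑ ε ∈ corners, (Φ h (z + ε) x • (u (z + ε) - u z)) i|
      ≤ ∑ ε ∈ corners, |(Φ h (z + ε) x • (u (z + ε) - u z)) i| :=
        Finset.abs_sum_le_sum_abs _ _
  _ ≤ ∑ _ε ∈ corners, 3 * B u z := by
      apply Finset.sum_le_sum
      intro ε hε
      rw [Pi.smul_apply, smul_eq_mul, abs_mul, Pi.sub_apply]
      calc |Φ h (z + ε) x| * |u (z + ε) i - u z i|
          ≤ 1 * (3 * B u z) :=
            mul_le_mul (abs_Φ_le_one _ _ _) (diff_le_B hε i) (abs_nonneg _) zero_le_one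
      _ = 3 * B u z := one_mul _
  _ = 24 * B u z := by rw [Finset.sum_const, card_corners]; push_cast; ring

lemma Wd_apply_le (hu0 : ∀ y ∉ G, u y = 0) (ha : InCello h z x)
    (hM : ∀ t, |ψ' t| ≤ M) (hh : 0 < h) (i i' : Fin 3) :
    |Wd h G u i x i'| ≤ 24 * (M * h⁻¹) * B u z := by
  rw [Wd_eq_corners hu0 ha i, Finset.sum_apply]
  calc |∑ ε ∈ corners, (Φd h i (z + ε) x • (u (z + ε) - u z)) i'|
      ≤ ∑ ε ∈ corners, |(Φd h i (z + ε) x • (u (z + ε) - u z)) i'| :=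
        Finset.abs_sum_le_sum_abs _ _
  _ ≤ ∑ _ε ∈ corners, (M * h⁻¹) * (3 * B u z) := by
      apply Finset.sum_le_sum
      intro ε hε
      rw [Pi.smul_apply, smul_eq_mul, abs_mul, Pi.sub_apply]
      have hM0 : 0 ≤ M := le_trans (abs_nonneg _) (hM 0)
      exact mul_le_mul (abs_Φd_le hM hh i) (diff_le_B hε i') (abs_nonneg _) (by positivity)
  _ = 24 * (M * h⁻¹) * B u z := by rw [Finset.sum_const, card_corners]; push_cast; ring

lemma W_sub_norm_le (hu0 : ∀ y ∉ G, u y = 0) (ha : InCell h z x) :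
    ‖W h G u x - u z‖ ≤ 24 * B u z := by
  have hB := B_nonneg u z
  rw [pi_norm_le_iff_of_nonneg (by positivity)]
  intro i
  rw [Pi.sub_apply, Real.norm_eq_abs]
  exact W_sub_apply_le hu0 ha i

lemma Wd_norm_le (hu0 : ∀ y ∉ G, u y = 0) (ha : InCello h z x)
    (hM : ∀ t, |ψ' t| ≤ M) (hh : 0 < h) (i : Fin 3) :
    ‖Wd h G u i x‖ ≤ 24 * (M * h⁻¹) * B u z := by
  have hM0 : 0 ≤ M := le_trans (abs_nonneg _) (hM 0)
  have hB := B_nonneg u z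
  rw [pi_norm_le_iff_of_nonneg (by positivity)]
  intro i'
  rw [Real.norm_eq_abs]
  exact Wd_apply_le hu0 ha hM hh i i'

end Bounds


section Qsum

variable {h : ℝ} {z y : Pt} {G : Finset Pt} {u : Pt → Fin 3 → ℝ}

noncomputable def q (u : Pt → Fin 3 → ℝ) (y : Pt) : ℝ :=
  ∑ j, ∑ i, (u (y + ee j) i - u y i) ^ 2

lemma q_nonneg (u : Pt → Fin 3 → ℝ) (y : Pt) : 0 ≤ q u y :=
  Finset.sum_nonneg fun j _ => Finset.sum_nonneg fun i _ => sq_nonneg _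

lemma q_zero_off (hu0 : ∀ y ∉ G, u y = 0) (hub : ∀ z ∈ bdry G, u z = 0)
    (hy : y ∉ G) : q u y = 0 := by
  have h1 : u y = 0 := hu0 y hy
  have h2 : ∀ j, u (y + ee j) = 0 := by
    intro j
    by_cases hmem : y + ee j ∈ G
    · apply hub
      simp only [bdry, Finset.mem_filter]
      refine ⟨hmem, j, Or.inr ?_⟩
      rwa [add_sub_cancel_right]
    · exact hu0 _ hmem
  rw [q]
  apply Finset.sum_eq_zero
  intro j _
  apply Finset.sum_eq_zero
  intro i _
  rw [h1, h2 j]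
  simp

lemma sum_q_le (hq : ∀ y ∉ G, q u y = 0) (s : Finset Pt) :
    ∑ y ∈ s, q u y ≤ ∑ y ∈ G, q u y := by
  classical
  have e1 : ∑ y ∈ s, q u y = ∑ y ∈ s ∩ G, q u y := by
    symm
    apply Finset.sum_subset Finset.inter_subset_left
    intro y hys hyn
    exact hq y (fun hyG => hyn (Finset.mem_inter.2 ⟨hys, hyG⟩))
  rw [e1]
  exact Finset.sum_le_sum_of_subset_of_nonneg Finset.inter_subset_right
    (fun y hyG _ => q_nonneg u y)

lemma B_sq_le (u : Pt → Fin 3 → ℝ) (z : Pt) :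
    B u z ^ 2 ≤ 72 * ∑ η ∈ corners, q u (z + η) := by
  have h2 : ∀ η : Pt, (∑ j, ∑ i, |u (z + η + ee j) i - u (z + η) i|) ^ 2
      ≤ 9 * q u (z + η) := by
    intro η
    rw [← Finset.sum_product']
    have hcs := sq_sum_le_card_mul_sum_sq
      (s := (Finset.univ ×ˢ Finset.univ : Finset (Fin 3 × Fin 3)))
      (f := fun p : Fin 3 × Fin 3 => |u (z + η + ee p.1) p.2 - u (z + η) p.2|)
    have hcard : (((Finset.univ ×ˢ Finset.univ : Finset (Fin 3 × Fin 3))).card = 9) := by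
      simp
    rw [hcard] at hcs
    have he : ∑ p ∈ (Finset.univ ×ˢ Finset.univ : Finset (Fin 3 × Fin 3)),
        |u (z + η + ee p.1) p.2 - u (z + η) p.2| ^ 2 = q u (z + η) := by
      rw [q, ← Finset.sum_product']
      exact Finset.sum_congr rfl fun p _ => sq_abs _
    rw [he] at hcs
    exact_mod_cast hcs
  have h1 : B u z ^ 2
      ≤ 8 * ∑ η ∈ corners, (∑ j, ∑ i, |u (z + η + ee j) i - u (z + η) i|) ^ 2 := by
    have := sq_sum_le_card_mul_sum_sq
      (s := corners) (f := fun η => ∑ j, ∑ i, |u (z + η + ee j) i - u (z + η) i|)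
    rw [card_corners] at this
    exact_mod_cast this
  calc B u z ^ 2 ≤ 8 * ∑ η ∈ corners, (∑ j, ∑ i, |u (z + η + ee j) i - u (z + η) i|) ^ 2 := h1
  _ ≤ 8 * ∑ η ∈ corners, 9 * q u (z + η) := by
      have := Finset.sum_le_sum (fun η (_ : η ∈ corners) => h2 η)
      linarith
  _ = 72 * ∑ η ∈ corners, q u (z + η) := by rw [← Finset.mul_sum]; ring

lemma sum_B_sq_le (hq : ∀ y ∉ G, q u y = 0) (S : Finset Pt) :
    ∑ z ∈ S, B u z ^ 2 ≤ 576 * ∑ y ∈ G, q u y := by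
  classical
  calc ∑ z ∈ S, B u z ^ 2 ≤ ∑ z ∈ S, 72 * ∑ η ∈ corners, q u (z + η) :=
        Finset.sum_le_sum fun z _ => B_sq_le u z
  _ = 72 * ∑ η ∈ corners, ∑ z ∈ S, q u (z + η) := by
      rw [← Finset.mul_sum, Finset.sum_comm]
  _ ≤ 72 * ∑ _η ∈ corners, ∑ y ∈ G, q u y := by
      have : ∀ η ∈ corners, ∑ z ∈ S, q u (z + η) ≤ ∑ y ∈ G, q u y := by
        intro η _
        have e : ∑ z ∈ S, q u (z + η) = ∑ y ∈ S.image (fun z => z + η), q u y := by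
          rw [Finset.sum_image]
          intro a _ b _ hab
          exact add_right_cancel hab
        rw [e]
        exact sum_q_le hq _
      have := Finset.sum_le_sum this
      linarith
  _ = 576 * ∑ y ∈ G, q u y := by rw [Finset.sum_const, card_corners]; push_cast; ring

lemma sum_q_le_sq_sum_DpNorm (hh : 0 < h) :
    h * ∑ y ∈ G, q u y ≤ (∑ j, DpNorm h G u j) ^ 2 := by
  have hsq : ∀ j, DpNorm h G u j ^ 2 = h * ∑ z ∈ G, ∑ i, (u (z + ee j) i - u z i) ^ 2 := by
    intro j
    rw [DpNorm, Real.sq_sqrt]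
    · rw [Finset.mul_sum]
      apply Finset.sum_congr rfl
      intro z _
      rw [Finset.sum_mul, Finset.mul_sum]
      apply Finset.sum_congr rfl
      intro i _
      rw [div_pow]
      field_simp
    · apply Finset.sum_nonneg
      intro z _
      apply mul_nonneg (Finset.sum_nonneg fun i _ => sq_nonneg _) (by positivity)
  have h1 : ∑ j, DpNorm h G u j ^ 2 ≤ (∑ j, DpNorm h G u j) ^ 2 :=
    Finset.sum_sq_le_sq_sum_of_nonneg fun j _ => Real.sqrt_nonneg _
  have h2 : ∑ j, DpNorm h G u j ^ 2 = h * ∑ y ∈ G, q u y := by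
    rw [Finset.sum_congr rfl fun j (_ : j ∈ Finset.univ) => hsq j]
    rw [← Finset.mul_sum, Finset.sum_comm]
    congr 1
  linarith

def Gc (G : Finset Pt) : Finset Pt := G.biUnion fun y => corners.image fun ε => y - ε

lemma not_mem_Gc (hz : z ∉ Gc G) : ∀ ε ∈ corners, z + ε ∉ G := by
  intro ε hε hmem
  apply hz
  rw [Gc, Finset.mem_biUnion]
  exact ⟨z + ε, hmem, Finset.mem_image.2 ⟨ε, hε, add_sub_cancel_right z ε⟩⟩

end Qsum

section Geometry

variable {h : ℝ} {z : Pt} {x : Fin 3 → ℝ} {G : Finset Pt} {u : Pt → Fin 3 → ℝ}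

def CellSet (h : ℝ) (z : Pt) : Set (Fin 3 → ℝ) :=
  {x | ∀ i, h * z i ≤ x i ∧ x i < h * z i + h}

noncomputable def zfloor (h : ℝ) (x : Fin 3 → ℝ) : Pt := fun i => ⌊x i / h⌋

def Nset (h : ℝ) : Set (Fin 3 → ℝ) := {x | ∃ i, ∃ k : ℤ, x i = h * k}

lemma cellSet_eq_pi : CellSet h z = Set.univ.pi fun i => Set.Ico (h * z i) (h * z i + h) := by
  ext x
  simp [CellSet, Set.mem_pi, Set.mem_Ico]

lemma measurableSet_cellSet : MeasurableSet (CellSet h z) := by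
  rw [cellSet_eq_pi]
  exact MeasurableSet.univ_pi fun i => measurableSet_Ico

lemma volume_cellSet : volume (CellSet h z) = ENNReal.ofReal h ^ 3 := by
  rw [cellSet_eq_pi, volume_pi_pi]
  simp [Real.volume_Ico]

lemma mem_cellSet_zfloor (hh : 0 < h) (x : Fin 3 → ℝ) : x ∈ CellSet h (zfloor h x) := by
  intro i
  have h1 : ((zfloor h x i : ℝ)) ≤ x i / h := Int.floor_le _
  have h2 : x i / h < zfloor h x i + 1 := Int.lt_floor_add_one _
  constructor
  · rw [mul_comm]
    exact (le_div_iff₀ hh).1 h1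
  · have := (div_lt_iff₀ hh).1 h2
    calc x i < (zfloor h x i + 1) * h := this
    _ = h * zfloor h x i + h := by ring

lemma zfloor_eq (hh : 0 < h) (hx : x ∈ CellSet h z) : zfloor h x = z := by
  funext i
  rw [zfloor, Int.floor_eq_iff]
  constructor
  · rw [le_div_iff₀ hh, mul_comm]
    exact (hx i).1
  · rw [div_lt_iff₀ hh]
    calc x i < h * z i + h := (hx i).2
    _ = (z i + 1) * h := by ring

lemma inCell_of_mem (hh : 0 < h) (hx : x ∈ CellSet h z) : InCell h z x := by
  intro i
  constructor
  · rw [sub_nonneg, le_div_iff₀ hh, mul_comm]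
    exact (hx i).1
  · rw [sub_lt_iff_lt_add, div_lt_iff₀ hh]
    calc x i < h * z i + h := (hx i).2
    _ = (1 + z i) * h := by ring

lemma inCello_of_mem (hh : 0 < h) (hx : x ∈ CellSet h z) (hN : x ∉ Nset h) :
    InCello h z x := by
  intro i
  refine ⟨?_, (inCell_of_mem hh hx i).2⟩
  rcases lt_or_eq_of_le (inCell_of_mem hh hx i).1 with hlt | heq
  · exact hlt
  · exfalso
    apply hN
    refine ⟨i, z i, ?_⟩
    have : x i / h = z i := by linarith
    field_simp at this
    linarith [this]

lemma volume_Nset (hh : 0 < h) : volume (Nset h) = 0 := by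
  have hsub : Nset h ⊆ ⋃ i : Fin 3, ⋃ k : ℤ, {x : Fin 3 → ℝ | x i = h * k} := by
    intro x hx
    obtain ⟨i, k, hk⟩ := hx
    exact Set.mem_iUnion.2 ⟨i, Set.mem_iUnion.2 ⟨k, hk⟩⟩
  apply measure_mono_null hsub
  apply measure_iUnion_null
  intro i
  apply measure_iUnion_null
  intro k
  have : {x : Fin 3 → ℝ | x i = h * k} = {f : Fin 3 → ℝ | f i = h * k} := rfl
  rw [this, volume_pi]
  exact MeasureTheory.Measure.pi_hyperplane _ i _

lemma cellSet_pairwiseDisjoint (hh : 0 < h) (s : Finset Pt) :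
    Set.PairwiseDisjoint (↑s) (CellSet h) := by
  intro a ha b hb hab
  rw [Function.onFun, Set.disjoint_left]
  intro x hxa hxb
  exact hab ((zfloor_eq hh hxa).symm.trans (zfloor_eq hh hxb))

end Geometry
section Support

variable {h : ℝ} {z : Pt} {x : Fin 3 → ℝ} {G : Finset Pt} {u : Pt → Fin 3 → ℝ}

def Kset (h : ℝ) (z : Pt) : Set (Fin 3 → ℝ) :=
  Set.univ.pi fun i => Set.Icc (h * z i - h) (h * z i + h)

lemma isCompact_Kset : IsCompact (Kset h z) :=
  isCompact_univ_pi fun i => isCompact_Icc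

lemma isClosed_Kset : IsClosed (Kset h z) :=
  isClosed_set_pi fun i _ => isClosed_Icc

lemma support_W_subset (hh : 0 < h) :
    Function.support (W h G u) ⊆ ⋃ z ∈ G, Kset h z := by
  intro x hx
  rw [Function.mem_support] at hx
  have : ∃ z ∈ G, Φ h z x • u z ≠ 0 := by
    by_contra hc
    push_neg at hc
    exact hx (Finset.sum_eq_zero hc)
  obtain ⟨z, hzG, hz⟩ := this
  have hΦ : Φ h z x ≠ 0 := fun h0 => hz (by rw [h0, zero_smul])
  refine Set.mem_biUnion hzG ?_
  intro i _
  have hψ : ψ (x i / h - z i) ≠ 0 := by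
    intro h0
    exact hΦ (Finset.prod_eq_zero (Finset.mem_univ i) h0)
  have hl : -1 < x i / h - z i := by
    by_contra hc; push_neg at hc; exact hψ (ψ_zero_left hc)
  have hr : x i / h - z i < 1 := by
    by_contra hc; push_neg at hc; exact hψ (ψ_zero_right hc)
  rw [Set.mem_Icc]
  rw [sub_lt_iff_lt_add, neg_lt_sub_iff_lt_add] at *
  constructor
  · have := (lt_div_iff₀ hh).1 (by linarith : (z i : ℝ) - 1 < x i / h)
    nlinarith
  · have := (div_lt_iff₀ hh).1 (by linarith : x i / h < (z i : ℝ) + 1)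
    nlinarith

lemma tsupport_W_subset (hh : 0 < h) :
    tsupport (W h G u) ⊆ ⋃ z ∈ G, Kset h z := by
  apply closure_minimal (support_W_subset hh)
  exact Set.Finite.isClosed_biUnion (Finset.finite_toSet G) fun z _ => isClosed_Kset

lemma hasCompactSupport_W (hh : 0 < h) : HasCompactSupport (W h G u) := by
  apply HasCompactSupport.intro (K := ⋃ z ∈ (G : Finset Pt), Kset h z)
  · exact (Finset.finite_toSet G).isCompact_biUnion fun z _ => isCompact_Kset
  · intro x hx
    by_contra hW
    exact hx (support_W_subset hh hW)

lemma norm_Φf_le {M : ℝ} (hM : ∀ t, |ψ' t| ≤ M) (hh : 0 < h) :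
    ‖Φf h z x‖ ≤ 3 * M * h⁻¹ := by
  have hM0 : 0 ≤ M := le_trans (abs_nonneg _) (hM 0)
  have hinv : (0:ℝ) ≤ h⁻¹ := le_of_lt (inv_pos.2 hh)
  apply ContinuousLinearMap.opNorm_le_bound _ (by positivity)
  intro y
  rw [Φf]
  simp only [ContinuousLinearMap.sum_apply, ContinuousLinearMap.smul_apply,
    ContinuousLinearMap.proj_apply, smul_eq_mul]
  have hterm : ∀ k : Fin 3,
      |(∏ j ∈ Finset.univ.erase k, ψ (x j / h - z j)) *
        (ψ' (x k / h - z k) * (h⁻¹ * y k))| ≤ M * h⁻¹ * ‖y‖ := by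
    intro k
    have h1 : |∏ j ∈ Finset.univ.erase k, ψ (x j / h - z j)| ≤ 1 := by
      rw [Finset.abs_prod]
      calc ∏ j ∈ Finset.univ.erase k, |ψ (x j / h - z j)|
          ≤ ∏ j ∈ Finset.univ.erase k, 1 :=
            Finset.prod_le_prod (fun j _ => abs_nonneg _) (fun j _ => abs_ψ_le _)
      _ = 1 := Finset.prod_const_one
    have h2 : |y k| ≤ ‖y‖ := by
      rw [← Real.norm_eq_abs]
      exact norm_le_pi_norm y k
    rw [abs_mul, abs_mul, abs_mul, abs_of_pos (inv_pos.2 hh)]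
    calc |∏ j ∈ Finset.univ.erase k, ψ (x j / h - z j)| *
          (|ψ' (x k / h - z k)| * (h⁻¹ * |y k|))
        ≤ 1 * (M * (h⁻¹ * ‖y‖)) := by
          apply mul_le_mul h1 _ (by positivity) zero_le_one
          apply mul_le_mul (hM _) _ (by positivity) hM0
          exact mul_le_mul_of_nonneg_left h2 hinv
    _ = M * h⁻¹ * ‖y‖ := by ring
  rw [Real.norm_eq_abs]
  calc |∑ k : Fin 3, (∏ j ∈ Finset.univ.erase k, ψ (x j / h - z j)) *
        (ψ' (x k / h - z k) * (h⁻¹ * y k))|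
      ≤ ∑ k : Fin 3, |(∏ j ∈ Finset.univ.erase k, ψ (x j / h - z j)) *
        (ψ' (x k / h - z k) * (h⁻¹ * y k))| := Finset.abs_sum_le_sum_abs _ _
  _ ≤ ∑ _k : Fin 3, M * h⁻¹ * ‖y‖ := Finset.sum_le_sum fun k _ => hterm k
  _ = 3 * M * h⁻¹ * ‖y‖ := by
      rw [Finset.sum_const]
      simp
      ring

lemma exists_lipschitz {M : ℝ} (hM : ∀ t, |ψ' t| ≤ M) (hh : 0 < h) :
    ∃ C : ℝ≥0, LipschitzWith C (W h G u) := by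
  have hM0 : 0 ≤ M := le_trans (abs_nonneg _) (hM 0)
  set ρ : ℝ := ∑ z ∈ G, (3 * M * h⁻¹) * ‖u z‖ with hρ
  have hρ0 : 0 ≤ ρ := Finset.sum_nonneg fun z _ => by positivity
  refine ⟨ρ.toNNReal, ?_⟩
  apply lipschitzWith_of_nnnorm_fderiv_le (𝕜 := ℝ)
  · intro x
    exact (hasFDerivAt_W (G := G) (u := u) (x := x)).differentiableAt
  · intro x
    have hb : ‖fderiv ℝ (W h G u) x‖ ≤ ρ := by
      rw [(hasFDerivAt_W (G := G) (u := u) (x := x)).fderiv]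
      calc ‖∑ z ∈ G, (Φf h z x).smulRight (u z)‖
          ≤ ∑ z ∈ G, ‖(Φf h z x).smulRight (u z)‖ := norm_sum_le _ _
      _ ≤ ρ := by
          apply Finset.sum_le_sum
          intro z _
          rw [ContinuousLinearMap.norm_smulRight_apply]
          exact mul_le_mul_of_nonneg_right (norm_Φf_le hM hh) (norm_nonneg _)
    rw [← norm_toNNReal]
    exact Real.toNNReal_mono hb

end Support
section Integration

variable {h : ℝ} {G : Finset Pt} {u : Pt → Fin 3 → ℝ}

lemma lintegral_split (hh : 0 < h) (G' : Finset Pt) (F : (Fin 3 → ℝ) → ℝ≥0∞)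
    (hF : ∀ᵐ x : Fin 3 → ℝ ∂volume, x ∉ (⋃ z ∈ G', CellSet h z) → F x = 0) :
    (∫⁻ x, F x) ≤ ∑ z ∈ G', ∫⁻ x in CellSet h z, F x := by
  have hSm : MeasurableSet (⋃ z ∈ G', CellSet h z) :=
    MeasurableSet.biUnion (Finset.countable_toSet G') fun z _ => measurableSet_cellSet
  rw [← lintegral_add_compl F hSm]
  have h2 : (∫⁻ x in (⋃ z ∈ G', CellSet h z)ᶜ, F x) = 0 := by
    have hae : F =ᵐ[volume.restrict (⋃ z ∈ G', CellSet h z)ᶜ] 0 := by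
      filter_upwards [ae_restrict_mem hSm.compl, ae_restrict_of_ae hF] with x hx1 hx2
      exact hx2 hx1
    rw [lintegral_congr_ae hae]
    simp
  rw [h2, add_zero,
    lintegral_biUnion_finset (cellSet_pairwiseDisjoint hh G')
      (fun z _ => measurableSet_cellSet) F]

lemma setLIntegral_le_of_bound {s N : Set (Fin 3 → ℝ)} (hs : MeasurableSet s)
    (hN : volume N = 0) {F : (Fin 3 → ℝ) → ℝ≥0∞} {c : ℝ≥0∞}
    (hb : ∀ x ∈ s, x ∉ N → F x ≤ c) :
    (∫⁻ x in s, F x) ≤ c * volume s := by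
  have hae : ∀ᵐ x ∂(volume.restrict s), F x ≤ c := by
    have hNae : ∀ᵐ x : Fin 3 → ℝ ∂volume, x ∉ N := by
      rw [MeasureTheory.ae_iff]
      simpa [Classical.not_not] using hN
    filter_upwards [ae_restrict_mem hs, ae_restrict_of_ae hNae] with x hx1 hx2
    exact hb x hx1 hx2
  calc (∫⁻ x in s, F x) ≤ ∫⁻ _x in s, c := lintegral_mono_ae hae
  _ = c * volume s := by rw [setLIntegral_const]

lemma enorm_sq_le {y : Fin 3 → ℝ} {c : ℝ} (hy : ‖y‖ ≤ c) :
    (‖y‖₊ : ℝ≥0∞) ^ (2:ℝ) ≤ ENNReal.ofReal (c ^ 2) := by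
  rw [← enorm_eq_nnnorm, ← ofReal_norm]
  rw [ENNReal.ofReal_rpow_of_nonneg (norm_nonneg y) (by norm_num : (0:ℝ) ≤ 2)]
  apply ENNReal.ofReal_le_ofReal
  have h1 : ‖y‖ ^ (2:ℝ) = ‖y‖ ^ (2:ℕ) := by
    rw [← Real.rpow_natCast ‖y‖ 2]
    norm_num
  rw [h1]
  calc ‖y‖ ^ (2:ℕ) ≤ c ^ (2:ℕ) := pow_le_pow_left₀ (norm_nonneg _) hy 2
  _ = c ^ 2 := rfl

lemma eLpNorm_le_of_lintegral {μ : Measure (Fin 3 → ℝ)} {f : (Fin 3 → ℝ) → Fin 3 → ℝ} {c : ℝ}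
    (hc : 0 ≤ c) (hint : ∫⁻ x, (‖f x‖₊ : ℝ≥0∞) ^ (2:ℝ) ∂μ ≤ ENNReal.ofReal (c ^ 2)) :
    eLpNorm f 2 μ ≤ ENNReal.ofReal c := by
  rw [eLpNorm_eq_lintegral_rpow_enorm_toReal two_ne_zero ENNReal.ofNat_ne_top]
  have h2 : ((2:ℝ≥0∞).toReal) = 2 := by simp
  rw [h2]
  calc (∫⁻ x, (‖f x‖₊:ℝ≥0∞) ^ (2:ℝ) ∂μ) ^ (1/2:ℝ)
      ≤ (ENNReal.ofReal (c^2)) ^ (1/2:ℝ) := ENNReal.rpow_le_rpow hint (by norm_num)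
  _ = ENNReal.ofReal c := by
      rw [ENNReal.ofReal_rpow_of_nonneg (by positivity) (by norm_num : (0:ℝ) ≤ 1/2)]
      congr 1
      have h3 : (c ^ 2 : ℝ) = c ^ ((2:ℕ):ℝ) := by rw [Real.rpow_natCast]
      rw [h3, ← Real.rpow_mul hc]
      norm_num

end Integration
end LipInterp

open LipInterp in
/-- **Lipschitz interpolation of step functions** (Lemma 2.4): for `u : Ω_h → ℝ³`
vanishing on `∂Ω_h` and the associated piecewise-constant step function `v`, there
is a compactly supported Lipschitz `w` on `Ω` with
`‖w - v‖_{L²(Ω)} ≤ K h ∑_j ‖D_j⁺u‖_{Ω_h}` and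
`‖∂_{x_i} w‖_{L²(Ω)} ≤ K ∑_j ‖D_j⁺u‖_{Ω_h}`, `K` independent of `u` and `h`. -/
theorem lipschitz_interpolation (Ω : Set (Fin 3 → ℝ))
    (hΩo : IsOpen Ω) (hΩb : Bornology.IsBounded Ω) (hΩc : IsConnected Ω) :
    ∃ K > (0 : ℝ), ∀ h : ℝ, 0 < h → ∀ Ωh : Finset Pt,
      (∀ z : Pt, z ∈ Ωh ↔ ((fun i => h * z i) ∈ Ω ∧
        {x : Fin 3 → ℝ | ∀ i, |x i - h * z i| ≤ 2 * h} ⊆ Ω)) →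
      ∀ u : Pt → Fin 3 → ℝ, (∀ z ∉ Ωh, u z = 0) → (∀ z ∈ bdry Ωh, u z = 0) →
      ∀ v : (Fin 3 → ℝ) → Fin 3 → ℝ,
        (∀ z ∈ Ωh, ∀ x : Fin 3 → ℝ,
          (∀ i, h * z i ≤ x i ∧ x i < h * z i + h) → v x = u z) →
        (∀ x : Fin 3 → ℝ,
          (¬ ∃ z ∈ Ωh, ∀ i, h * z i ≤ x i ∧ x i < h * z i + h) → v x = 0) →
      ∃ (w : (Fin 3 → ℝ) → Fin 3 → ℝ) (C : ℝ≥0),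
        LipschitzWith C w ∧ HasCompactSupport w ∧ tsupport w ⊆ Ω ∧
        eLpNorm (fun x => w x - v x) 2 (volume.restrict Ω)
          ≤ ENNReal.ofReal (K * h * ∑ j, DpNorm h Ωh u j) ∧
        ∀ i : Fin 3,
          eLpNorm (fun x => fderiv ℝ w x (Pi.single i 1)) 2 (volume.restrict Ω)
            ≤ ENNReal.ofReal (K * ∑ j, DpNorm h Ωh u j) := by
  obtain ⟨M, hMpos, hM⟩ := LipInterp.exists_ψ'_bound
  have hM0 : (0:ℝ) ≤ M := hMpos.le
  refine ⟨576 * (M + 1), by positivity, ?_⟩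
  intro h hh Ωh hΩh u hu0 hub v hv1 hv2
  set P : ℝ := ∑ j, DpNorm h Ωh u j with hP
  have hP0 : 0 ≤ P := Finset.sum_nonneg fun j _ => Real.sqrt_nonneg _
  have hq0 : ∀ y ∉ Ωh, q u y = 0 := fun y hy => q_zero_off hu0 hub hy
  have hsq0 : 0 ≤ ∑ y ∈ Ωh, q u y := Finset.sum_nonneg fun y _ => q_nonneg u y
  have hsq : h * ∑ y ∈ Ωh, q u y ≤ P ^ 2 := sum_q_le_sq_sum_DpNorm hh
  have hBB : ∑ z ∈ Gc Ωh, B u z ^ 2 ≤ 576 * ∑ y ∈ Ωh, q u y := sum_B_sq_le hq0 _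
  have hv : ∀ x, v x = u (zfloor h x) := by
    intro x
    by_cases hzG : zfloor h x ∈ Ωh
    · exact hv1 _ hzG x (mem_cellSet_zfloor hh x)
    · rw [hu0 _ hzG]
      apply hv2
      rintro ⟨z', hz', hcell'⟩
      exact hzG (by rw [zfloor_eq hh (hcell' : x ∈ CellSet h z')]; exact hz')
  obtain ⟨C, hC⟩ := exists_lipschitz (G := Ωh) (u := u) hM hh
  have hNae : ∀ᵐ x : Fin 3 → ℝ ∂volume, x ∉ Nset h := by
    rw [MeasureTheory.ae_iff]
    simpa [Classical.not_not] using volume_Nset hh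
  have hvol : ∀ z : Pt, volume (CellSet h z) = ENNReal.ofReal (h ^ 3) := by
    intro z
    rw [volume_cellSet, ← ENNReal.ofReal_pow hh.le]
  refine ⟨W h Ωh u, C, hC, hasCompactSupport_W hh, ?_, ?_, ?_⟩
  · -- tsupport ⊆ Ω
    refine (tsupport_W_subset hh).trans ?_
    intro x hx
    rw [Set.mem_iUnion₂] at hx
    obtain ⟨z, hz, hxK⟩ := hx
    apply ((hΩh z).1 hz).2
    intro i
    have hxi := hxK i (Set.mem_univ i)
    rw [Set.mem_Icc] at hxi
    rw [abs_le]
    constructor <;> [linarith [hxi.1, hh.le]; linarith [hxi.2, hh.le]]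
  · -- L² estimate for w - v
    apply eLpNorm_le_of_lintegral (by positivity : (0:ℝ) ≤ 576 * (M + 1) * h * P)
    calc ∫⁻ x, (‖W h Ωh u x - v x‖₊ : ℝ≥0∞) ^ (2:ℝ) ∂(volume.restrict Ω)
        ≤ ∫⁻ x, (‖W h Ωh u x - v x‖₊ : ℝ≥0∞) ^ (2:ℝ) :=
          lintegral_mono' Measure.restrict_le_self le_rfl
    _ ≤ ∑ z ∈ Gc Ωh, ∫⁻ x in CellSet h z, (‖W h Ωh u x - v x‖₊ : ℝ≥0∞) ^ (2:ℝ) := by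
        apply lintegral_split hh
        apply Filter.Eventually.of_forall
        intro x hxS
        have hmem := mem_cellSet_zfloor hh x
        have hzG : zfloor h x ∉ Gc Ωh := fun hzz => hxS (Set.mem_biUnion hzz hmem)
        have hcorners := not_mem_Gc hzG
        have hWx : W h Ωh u x = 0 := by
          rw [W_eq_corners hu0 (inCell_of_mem hh hmem)]
          apply Finset.sum_eq_zero
          intro ε hε
          rw [hu0 _ (hcorners ε hε), smul_zero]
        have hvx : v x = 0 := by
          rw [hv x, hu0]
          simpa using hcorners 0 zero_mem_corners
        rw [hWx, hvx, sub_zero, nnnorm_zero, ENNReal.coe_zero,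
          ENNReal.zero_rpow_of_pos (by norm_num)]
    _ ≤ ∑ z ∈ Gc Ωh, ENNReal.ofReal ((24 * B u z) ^ 2) * volume (CellSet h z) := by
        apply Finset.sum_le_sum
        intro z hz
        apply setLIntegral_le_of_bound measurableSet_cellSet (volume_Nset hh)
        intro x hx _
        have h1 : v x = u z := by rw [hv x, zfloor_eq hh hx]
        have h2 : ‖W h Ωh u x - u z‖ ≤ 24 * B u z := W_sub_norm_le hu0 (inCell_of_mem hh hx)
        rw [← h1] at h2
        exact enorm_sq_le h2
    _ = ENNReal.ofReal (∑ z ∈ Gc Ωh, (24 * B u z) ^ 2 * h ^ 3) := by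
        rw [ENNReal.ofReal_sum_of_nonneg (fun z _ => by positivity)]
        apply Finset.sum_congr rfl
        intro z _
        rw [hvol z, ← ENNReal.ofReal_mul (by positivity)]
    _ ≤ ENNReal.ofReal ((576 * (M + 1) * h * P) ^ 2) := by
        apply ENNReal.ofReal_le_ofReal
        have e1 : ∑ z ∈ Gc Ωh, (24 * B u z) ^ 2 * h ^ 3
            = 576 * h ^ 3 * ∑ z ∈ Gc Ωh, B u z ^ 2 := by
          rw [Finset.mul_sum]
          exact Finset.sum_congr rfl fun z _ => by ring
        rw [e1]
        have e2 : 576 * h ^ 3 * ∑ z ∈ Gc Ωh, B u z ^ 2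
            ≤ 576 * h ^ 3 * (576 * ∑ y ∈ Ωh, q u y) :=
          mul_le_mul_of_nonneg_left hBB (by positivity)
        have e4 : 576 * 576 * h ^ 2 * (h * ∑ y ∈ Ωh, q u y) ≤ 576 * 576 * h ^ 2 * P ^ 2 :=
          mul_le_mul_of_nonneg_left hsq (by positivity)
        have e3 : 576 * h ^ 3 * (576 * ∑ y ∈ Ωh, q u y)
            = 576 * 576 * h ^ 2 * (h * ∑ y ∈ Ωh, q u y) := by ring
        have e5 : 576 * 576 * h ^ 2 * P ^ 2 ≤ (576 * (M + 1) * h * P) ^ 2 := by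
          nlinarith [mul_nonneg hM0 (sq_nonneg (h * P)), sq_nonneg (M * (h * P))]
        linarith
  · -- L² estimate for the partial derivatives
    intro i
    apply eLpNorm_le_of_lintegral (by positivity : (0:ℝ) ≤ 576 * (M + 1) * P)
    calc ∫⁻ x, (‖fderiv ℝ (W h Ωh u) x (Pi.single i 1)‖₊ : ℝ≥0∞) ^ (2:ℝ)
          ∂(volume.restrict Ω)
        ≤ ∫⁻ x, (‖fderiv ℝ (W h Ωh u) x (Pi.single i 1)‖₊ : ℝ≥0∞) ^ (2:ℝ) :=
          lintegral_mono' Measure.restrict_le_self le_rfl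
    _ ≤ ∑ z ∈ Gc Ωh, ∫⁻ x in CellSet h z,
          (‖fderiv ℝ (W h Ωh u) x (Pi.single i 1)‖₊ : ℝ≥0∞) ^ (2:ℝ) := by
        apply lintegral_split hh
        filter_upwards [hNae] with x hxN hxS
        have hmem := mem_cellSet_zfloor hh x
        have hzG : zfloor h x ∉ Gc Ωh := fun hzz => hxS (Set.mem_biUnion hzz hmem)
        have hcorners := not_mem_Gc hzG
        have hWd : Wd h Ωh u i x = 0 := by
          rw [Wd_eq_corners hu0 (inCello_of_mem hh hmem hxN) i]
          apply Finset.sum_eq_zero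
          intro ε hε
          have hz0 : u (zfloor h x) = 0 := by
            simpa using hu0 _ (by simpa using hcorners 0 zero_mem_corners)
          rw [hu0 _ (hcorners ε hε), hz0, sub_zero, smul_zero]
        rw [fderiv_W_apply i, hWd, nnnorm_zero, ENNReal.coe_zero,
          ENNReal.zero_rpow_of_pos (by norm_num)]
    _ ≤ ∑ z ∈ Gc Ωh, ENNReal.ofReal ((24 * (M * h⁻¹) * B u z) ^ 2) * volume (CellSet h z) := by
        apply Finset.sum_le_sum
        intro z hz
        apply setLIntegral_le_of_bound measurableSet_cellSet (volume_Nset hh)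
        intro x hx hxN
        rw [fderiv_W_apply i]
        exact enorm_sq_le (Wd_norm_le hu0 (inCello_of_mem hh hx hxN) hM hh i)
    _ = ENNReal.ofReal (∑ z ∈ Gc Ωh, (24 * (M * h⁻¹) * B u z) ^ 2 * h ^ 3) := by
        rw [ENNReal.ofReal_sum_of_nonneg (fun z _ => by positivity)]
        apply Finset.sum_congr rfl
        intro z _
        rw [hvol z, ← ENNReal.ofReal_mul (by positivity)]
    _ ≤ ENNReal.ofReal ((576 * (M + 1) * P) ^ 2) := by
        apply ENNReal.ofReal_le_ofReal
        have hhne : h ≠ 0 := hh.ne'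
        have e1 : ∑ z ∈ Gc Ωh, (24 * (M * h⁻¹) * B u z) ^ 2 * h ^ 3
            = 576 * M ^ 2 * h * ∑ z ∈ Gc Ωh, B u z ^ 2 := by
          rw [Finset.mul_sum]
          apply Finset.sum_congr rfl
          intro z _
          field_simp
          ring
        rw [e1]
        have e2 : 576 * M ^ 2 * h * ∑ z ∈ Gc Ωh, B u z ^ 2
            ≤ 576 * M ^ 2 * h * (576 * ∑ y ∈ Ωh, q u y) :=
          mul_le_mul_of_nonneg_left hBB (by positivity)
        have e4 : 576 * 576 * M ^ 2 * (h * ∑ y ∈ Ωh, q u y) ≤ 576 * 576 * M ^ 2 * P ^ 2 :=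
          mul_le_mul_of_nonneg_left hsq (by positivity)
        have e3 : 576 * M ^ 2 * h * (576 * ∑ y ∈ Ωh, q u y)
            = 576 * 576 * M ^ 2 * (h * ∑ y ∈ Ωh, q u y) := by ring
        have e4' : 576 * 576 * M ^ 2 * (h * ∑ y ∈ Ωh, q u y) ≤ 576 * 576 * M ^ 2 * P ^ 2 :=
          mul_le_mul_of_nonneg_left hsq (by positivity)
        have e5 : 576 * 576 * M ^ 2 * P ^ 2 ≤ (576 * (M + 1) * P) ^ 2 := by
          nlinarith [mul_nonneg hM0 (sq_nonneg P), sq_nonneg P]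
        linarith
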